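/- Let G be a unicyclic graph with unique cycle C_{2n+1} and edge ideal I = I(G). Then for all 1 ≤ s ≤ n, the symbolic and ordinary powers coincide: I^(s) = I^s. -/

import Mathlib

open MvPolynomial

/-- The edge ideal of a graph. -/
noncomputable def edgeIdeal (K : Type*) [Field K] {V : Type*} (G : SimpleGraph V) :
    Ideal (MvPolynomial V K) :=
  Ideal.span {f | ∃ u v, G.Adj u v ∧ f = X u * X v}

/-- The `s`-th symbolic power: the intersection of `s`-th powers of the
associated primes of `R/I`. -/
noncomputable def symbolicPower {R : Type*} [CommRing R] (I : Ideal R) (s : ℕ) : Ideal R :=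
  ⨅ p ∈ associatedPrimes R (R ⧸ I), p ^ s

/-- `G` has `x 0, x 1, ..., x (2n)` as its unique cycle. -/
def HasUniqueOddCycle {V : Type*} (G : SimpleGraph V) (n : ℕ) (x : Fin (2 * n + 1) → V) : Prop :=
  1 ≤ n ∧ Function.Injective x ∧ (∀ i, G.Adj (x i) (x (i + 1))) ∧
    ∀ (v : V) (c : G.Walk v v), c.IsCycle →
      {e | e ∈ c.edges} = Set.range (fun i : Fin (2 * n + 1) => s(x i, x (i + 1)))

set_option linter.unusedSectionVars false
set_option linter.unusedVariables false
set_option maxHeartbeats 1000000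

open MvPolynomial Pointwise SimpleGraph Finsupp

section Aux

variable {K : Type*} [Field K] {V : Type*} [DecidableEq V]

noncomputable def edgeVec (u v : V) : V →₀ ℕ := Finsupp.single u 1 + Finsupp.single v 1

def activeG (G : SimpleGraph V) (d : V →₀ ℕ) : SimpleGraph V where
  Adj u v := G.Adj u v ∧ 0 < d u ∧ 0 < d v
  symm := ⟨fun u v ⟨h, hu, hv⟩ => ⟨h.symm, hv, hu⟩⟩
  loopless := ⟨fun u ⟨h, _, _⟩ => h.ne rfl⟩

noncomputable def msum (l : List (V × V)) : V →₀ ℕ := (l.map fun p => edgeVec p.1 p.2).sum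



/-- sums of `s` elements of `S` (with repetition) -/
def sumsOf (s : ℕ) (S : Set (V →₀ ℕ)) : Set (V →₀ ℕ) :=
  {d | ∃ l : List (V →₀ ℕ), l.length = s ∧ (∀ a ∈ l, a ∈ S) ∧ l.sum = d}

lemma span_monomial_mul (A B : Set (V →₀ ℕ)) :
    Ideal.span ((fun d => monomial d (1:K)) '' A) * Ideal.span ((fun d => monomial d (1:K)) '' B)
      = Ideal.span ((fun d => monomial d (1:K)) '' (A + B)) := by
  rw [Ideal.span_mul_span']
  congr 1
  ext f
  constructor
  · rintro ⟨_, ⟨a, ha, rfl⟩, _, ⟨b, hb, rfl⟩, rfl⟩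
    exact ⟨a + b, Set.add_mem_add ha hb, by simp [monomial_mul]⟩
  · rintro ⟨c, ⟨a, ha, b, hb, rfl⟩, rfl⟩
    exact ⟨monomial a 1, ⟨a, ha, rfl⟩, monomial b 1, ⟨b, hb, rfl⟩,
      by simp [monomial_mul]⟩

lemma sumsOf_succ (s : ℕ) (S : Set (V →₀ ℕ)) :
    sumsOf (s+1) S = sumsOf s S + S := by
  ext d
  constructor
  · rintro ⟨l, hl, hmem, rfl⟩
    match l, hl with
    | a :: t, hl =>
      refine ⟨t.sum, ⟨t, by simpa using hl, fun b hb => hmem b (by simp [hb]), rfl⟩,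
        a, hmem a (by simp), ?_⟩
      simp [add_comm]
  · rintro ⟨e, ⟨l, hl, hmem, rfl⟩, a, ha, rfl⟩
    exact ⟨l ++ [a], by simp [hl], fun b hb => by
      rcases List.mem_append.1 hb with h | h
      · exact hmem b h
      · simpa using (List.mem_singleton.1 h) ▸ ha, by simp⟩

lemma span_monomial_pow (S : Set (V →₀ ℕ)) (s : ℕ) :
    (Ideal.span ((fun d => monomial d (1:K)) '' S)) ^ s
      = Ideal.span ((fun d => monomial d (1:K)) '' sumsOf s S) := by
  induction s with
  | zero =>
      have h0 : sumsOf 0 S = {(0 : V →₀ ℕ)} := by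
        ext d
        constructor
        · rintro ⟨l, hl, -, rfl⟩
          simp [List.length_eq_zero_iff.1 hl]
        · rintro rfl
          exact ⟨[], rfl, by simp, rfl⟩
      simp [h0, Ideal.span_singleton_one, monomial_zero', C_1]
  | succ s ih =>
      rw [pow_succ, ih, span_monomial_mul, sumsOf_succ]



/-- kill the variables in C -/
noncomputable def killC (C : Finset V) : MvPolynomial V K →ₐ[K] MvPolynomial V K :=
  aeval (fun v => if v ∈ C then 0 else X v)

lemma killC_monomial (C : Finset V) (e : V →₀ ℕ) (c : K) :
    killC C (monomial e c) =
      if ∀ v ∈ C, e v = 0 then monomial e c else 0 := by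
  rw [killC, aeval_monomial]
  split_ifs with h
  · rw [monomial_eq]
    congr 1
    apply Finsupp.prod_congr
    intro v hv
    rw [if_neg]
    intro hvC
    exact (Finsupp.mem_support_iff.1 hv) (h v hvC)
  · push_neg at h
    obtain ⟨v, hvC, hv⟩ := h
    rw [Finsupp.prod, Finset.prod_eq_zero (Finsupp.mem_support_iff.2 hv)]
    · ring
    · rw [if_pos hvC, zero_pow hv]

lemma killC_eq_zero_iff (C : Finset V) (f : MvPolynomial V K) :
    killC C f = 0 ↔ f ∈ Ideal.span (X '' (C : Set V) : Set (MvPolynomial V K)) := by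
  constructor
  · intro h0
    rw [mem_ideal_span_X_image]
    intro d hd
    by_contra hcon
    push_neg at hcon
    have : coeff d (killC C f) = coeff d f := by
      conv_lhs => rw [f.as_sum, map_sum]
      rw [coeff_sum]
      conv_rhs => rw [f.as_sum, coeff_sum]
      apply Finset.sum_congr rfl
      intro e _
      rw [killC_monomial]
      split_ifs with h
      · rfl
      · push_neg at h
        obtain ⟨v, hvC, hv⟩ := h
        rw [coeff_zero, coeff_monomial, if_neg]
        · rintro rfl
          exact hv (hcon v hvC)
    rw [h0, coeff_zero] at this
    exact (MvPolynomial.mem_support_iff.1 hd) this.symm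
  · intro hf
    have : Ideal.span (X '' (C : Set V) : Set (MvPolynomial V K)) ≤
        RingHom.ker (killC C).toRingHom := by
      rw [Ideal.span_le]
      rintro _ ⟨v, hv, rfl⟩
      simp only [SetLike.mem_coe, RingHom.mem_ker, AlgHom.toRingHom_eq_coe,
        RingHom.coe_coe, killC, aeval_X]
      rw [if_pos (Finset.mem_coe.1 hv)]
    exact this hf

lemma isPrime_span_X (C : Finset V) :
    (Ideal.span (X '' (C : Set V) : Set (MvPolynomial V K))).IsPrime := by
  have : Ideal.span (X '' (C : Set V) : Set (MvPolynomial V K))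
      = RingHom.ker (killC (K := K) C).toRingHom := by
    ext f
    rw [RingHom.mem_ker]
    exact (killC_eq_zero_iff C f).symm
  rw [this]
  exact RingHom.ker_isPrime _




noncomputable def edgeVecs (G : SimpleGraph V) : Set (V →₀ ℕ) := {d | ∃ u v, G.Adj u v ∧ d = edgeVec u v}

lemma X_mul_X (u v : V) : (X u : MvPolynomial V K) * X v = monomial (edgeVec u v) 1 := by
  rw [X, X, monomial_mul, one_mul, edgeVec]

lemma edgeIdeal_eq (G : SimpleGraph V) :
    edgeIdeal K G = Ideal.span ((fun d => monomial d (1:K)) '' edgeVecs G) := by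
  unfold edgeIdeal
  congr 1
  ext f
  constructor
  · rintro ⟨u, v, huv, rfl⟩
    exact ⟨edgeVec u v, ⟨u, v, huv, rfl⟩, (X_mul_X u v).symm⟩
  · rintro ⟨d, ⟨u, v, huv, rfl⟩, rfl⟩
    exact ⟨u, v, huv, (X_mul_X u v).symm⟩

/-- vertex covers -/
def IsCover (G : SimpleGraph V) (C : Finset V) : Prop :=
  ∀ ⦃u v : V⦄, G.Adj u v → u ∈ C ∨ v ∈ C

def IsMinCover (G : SimpleGraph V) (C : Finset V) : Prop :=
  IsCover G C ∧ ∀ u ∈ C, ¬ IsCover G (C.erase u)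

lemma exists_minCover_subset (G : SimpleGraph V) :
    ∀ (C : Finset V), IsCover G C → ∃ C' ⊆ C, IsMinCover G C' := by
  intro C
  induction C using Finset.strongInductionOn with
  | _ C ih =>
    intro hC
    by_cases h : ∀ u ∈ C, ¬ IsCover G (C.erase u)
    · exact ⟨C, le_refl _, hC, h⟩
    · push_neg at h
      obtain ⟨u, hu, hcov⟩ := h
      obtain ⟨C', hsub, hmin⟩ := ih _ (Finset.erase_ssubset hu) hcov
      exact ⟨C', hsub.trans (Finset.erase_subset _ _), hmin⟩




lemma coeff_killC (C : Finset V) (f : MvPolynomial V K) (d : V →₀ ℕ) :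
    coeff d (killC C f) = if ∀ v ∈ C, d v = 0 then coeff d f else 0 := by
  conv_lhs => rw [f.as_sum, map_sum, coeff_sum]
  by_cases hd : ∀ v ∈ C, d v = 0
  · rw [if_pos hd]
    conv_rhs => rw [f.as_sum, coeff_sum]
    apply Finset.sum_congr rfl
    intro e _
    rw [killC_monomial]
    split_ifs with h
    · rfl
    · push_neg at h
      obtain ⟨v, hvC, hv⟩ := h
      rw [coeff_zero, coeff_monomial, if_neg]
      rintro rfl
      exact hv (hd v hvC)
  · rw [if_neg hd]
    apply Finset.sum_eq_zero
    intro e _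
    rw [killC_monomial]
    split_ifs with h
    · rw [coeff_monomial, if_neg]
      rintro rfl
      exact hd h
    · exact coeff_zero d


lemma exists_leaf [Fintype V] (H : SimpleGraph V)
    (hac : ∀ (v : V) (c : H.Walk v v), ¬ c.IsCycle)
    {a b : V} (hab : H.Adj a b) :
    ∃ u v, H.Adj u v ∧ ∀ w, H.Adj u w → w = v := by
  classical
  set S : Set ℕ := {ℓ | ∃ (a b : V) (p : H.Walk a b), p.IsPath ∧ p.length = ℓ} with hS
  have hne : S.Nonempty := by
    refine ⟨1, a, b, Walk.cons hab Walk.nil, ?_, rfl⟩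
    rw [Walk.cons_isPath_iff]
    exact ⟨Walk.IsPath.nil, by simp [hab.ne]⟩
  have hbdd : BddAbove S := by
    refine ⟨Fintype.card V, ?_⟩
    rintro ℓ ⟨a', b', p, hp, rfl⟩
    exact le_of_lt hp.length_lt
  obtain ⟨a', b', p, hp, hlen⟩ := Nat.sSup_mem hne hbdd
  have hmax : ∀ ℓ ∈ S, ℓ ≤ sSup S := fun ℓ hℓ => le_csSup hbdd hℓ
  have hlen1 : 1 ≤ sSup S := hmax 1 (by
      refine ⟨a, b, Walk.cons hab Walk.nil, ?_, rfl⟩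
      rw [Walk.cons_isPath_iff]
      exact ⟨Walk.IsPath.nil, by simp [hab.ne]⟩)
  match p, hlen with
  | Walk.nil, hlen => exact absurd hlen (by simpa using (Nat.lt_of_lt_of_le one_pos hlen1).ne)
  | Walk.cons (v := c) h q, hlen =>
    rw [Walk.cons_isPath_iff] at hp
    refine ⟨a', c, h, fun w hw => ?_⟩
    by_contra hwc
    have hwa : w ≠ a' := fun hh => (hh ▸ hw).ne rfl
    by_cases hws : w ∈ (Walk.cons h q).support
    · -- w is on the path: produces a cycle
      rw [Walk.support_cons, List.mem_cons] at hws
      rcases hws with rfl | hws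
      · exact hwa rfl
      · have t := q.takeUntil w hws
        have htp : (q.takeUntil w hws).IsPath := hp.1.takeUntil hws
        have hcyc : (Walk.cons hw.symm (Walk.cons h (q.takeUntil w hws))).IsCycle := by
          rw [Walk.cons_isCycle_iff]
          constructor
          · rw [Walk.cons_isPath_iff]
            exact ⟨htp, fun hcon => hp.2 (q.support_takeUntil_subset hws hcon)⟩
          · rw [Walk.edges_cons, List.mem_cons]
            push_neg
            constructor
            · intro hcon
              rw [Sym2.eq_iff] at hcon
              rcases hcon with ⟨h1, h2⟩ | ⟨h1, h2⟩
              · exact hwa h1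
              · exact hwc h1
            · intro hcon
              have : a' ∈ (q.takeUntil w hws).support :=
                Walk.snd_mem_support_of_mem_edges _ hcon
              exact hp.2 (q.support_takeUntil_subset hws this)
        exact hac w _ hcyc
    · -- extend the path: contradiction with maximality
      have hext : ((Walk.cons h q).cons hw.symm).IsPath := by
        rw [Walk.cons_isPath_iff]
        refine ⟨?_, hws⟩
        rw [Walk.cons_isPath_iff]
        exact ⟨hp.1, hp.2⟩
      have : sSup S + 1 ∈ S := ⟨w, b', (Walk.cons h q).cons hw.symm, hext, by
        simp [Walk.length_cons, hlen]⟩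
      have := hmax _ this
      omega




lemma activeG_mono (G : SimpleGraph V) {d d' : V →₀ ℕ} (h : d' ≤ d) :
    activeG G d' ≤ activeG G d := by
  rintro u v ⟨hadj, hu, hv⟩
  exact ⟨hadj, lt_of_lt_of_le hu (h u), lt_of_lt_of_le hv (h v)⟩

lemma acyclic_mono {H H' : SimpleGraph V} (hle : H' ≤ H)
    (hac : ∀ (v : V) (c : H.Walk v v), ¬ c.IsCycle) :
    ∀ (v : V) (c : H'.Walk v v), ¬ c.IsCycle := by
  intro v c hc
  have hsub : ∀ e ∈ c.edges, e ∈ H.edgeSet := fun e he =>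
    (SimpleGraph.edgeSet_mono hle) (c.edges_subset_edgeSet he)
  exact hac v (c.transfer H hsub) (hc.transfer hsub)


lemma msum_nil : msum ([] : List (V × V)) = 0 := rfl

lemma msum_cons (p : V × V) (l : List (V × V)) :
    msum (p :: l) = edgeVec p.1 p.2 + msum l := by
  simp [msum]

lemma edgeVec_apply (u v a : V) :
    edgeVec u v a = (if u = a then 1 else 0) + (if v = a then 1 else 0) := by
  simp [edgeVec, Finsupp.single_apply]

lemma edgeVec_le {G : SimpleGraph V} {d : V →₀ ℕ} {u v : V}
    (h : (activeG G d).Adj u v) : edgeVec u v ≤ d := by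
  obtain ⟨hadj, hu, hv⟩ := h
  intro a
  rw [edgeVec_apply]
  by_cases h1 : u = a
  · subst h1
    rw [if_pos rfl, if_neg (fun h2 => hadj.ne (h2.symm)), add_zero]
    exact hu
  · rw [if_neg h1, zero_add]
    by_cases h2 : v = a
    · subst h2; rw [if_pos rfl]; exact hv
    · rw [if_neg h2]; exact Nat.zero_le _

lemma sum_edgeVec (C : Finset V) (u v : V) (huv : u ≠ v) :
    ∑ a ∈ C, edgeVec u v a
      = (if u ∈ C then 1 else 0) + (if v ∈ C then 1 else 0) := by
  simp_rw [edgeVec_apply]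
  rw [Finset.sum_add_distrib, Finset.sum_ite_eq C u (fun _ => 1),
    Finset.sum_ite_eq C v (fun _ => 1)]

lemma forest_matching (G : SimpleGraph V) [Fintype V] :
    ∀ (s : ℕ) (d : V →₀ ℕ),
    (∀ (v : V) (c : (activeG G d).Walk v v), ¬ c.IsCycle) →
    (∀ C : Finset V, (∀ ⦃a b : V⦄, (activeG G d).Adj a b → a ∈ C ∨ b ∈ C) →
        s ≤ ∑ a ∈ C, d a) →
    ∃ l : List (V × V), l.length = s ∧ (∀ p ∈ l, G.Adj p.1 p.2) ∧ msum l ≤ d := by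
  intro s
  induction s with
  | zero => exact fun d _ _ => ⟨[], rfl, by simp, by simp [msum_nil]⟩
  | succ s ih =>
    intro d hac hcov
    -- there is an active edge
    have hedge : ∃ a b, (activeG G d).Adj a b := by
      by_contra hcon
      push_neg at hcon
      have := hcov ∅ (fun a b hab => absurd hab (by simpa using hcon a b))
      simp at this
    obtain ⟨a0, b0, hab0⟩ := hedge
    obtain ⟨u, v, huv, hleaf⟩ := exists_leaf (activeG G d) hac hab0
    have hGuv : G.Adj u v := huv.1
    have hdu : 0 < d u := huv.2.1
    have hdv : 0 < d v := huv.2.2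
    have hne : u ≠ v := hGuv.ne
    set d' := d - edgeVec u v with hd'
    have hee : edgeVec u v ≤ d := edgeVec_le huv
    have hdd : d' + edgeVec u v = d := tsub_add_cancel_of_le hee
    have hd'le : d' ≤ d := tsub_le_self
    have happ : ∀ w, d' w = d w - ((if u = w then 1 else 0) + (if v = w then 1 else 0)) :=
      fun w => by rw [hd', tsub_apply, edgeVec_apply]
    have hvu : v ≠ u := fun h => hne h.symm
    have hd'other : ∀ w, w ≠ u → w ≠ v → d' w = d w := by
      intro w h1 h2
      rw [happ, if_neg (fun h => h1 h.symm), if_neg (fun h => h2 h.symm)]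
      omega
    have hd'u : d' u = d u - 1 := by
      rw [happ, if_pos rfl, if_neg hvu]
    have hd'v : d' v = d v - 1 := by
      rw [happ, if_neg hne, if_pos rfl]
    have hsumC : ∀ C : Finset V, ∑ a ∈ C, d a = (∑ a ∈ C, d' a)
        + ((if u ∈ C then 1 else 0) + (if v ∈ C then 1 else 0)) := by
      intro C
      conv_lhs => rw [← hdd]
      rw [← sum_edgeVec C u v hne, ← Finset.sum_add_distrib]
      rfl
    -- edges of active(d) not touching u,v are active(d') edges
    have hact' : ∀ ⦃a b : V⦄, (activeG G d).Adj a b → a ≠ u → a ≠ v → b ≠ u → b ≠ v →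
        (activeG G d').Adj a b := by
      rintro a b ⟨hab, hda, hdb⟩ h1 h2 h3 h4
      exact ⟨hab, by rwa [hd'other a h1 h2], by rwa [hd'other b h3 h4]⟩
    -- cover bound for d'
    have hcov' : ∀ C' : Finset V, (∀ ⦃a b : V⦄, (activeG G d').Adj a b → a ∈ C' ∨ b ∈ C') →
        s ≤ ∑ a ∈ C', d' a := by
      intro C' hC'
      have key : ∃ C'' : Finset V,
          (∀ ⦃a b : V⦄, (activeG G d).Adj a b → a ∈ C'' ∨ b ∈ C'') ∧
          ∑ a ∈ C'', d a ≤ (∑ a ∈ C', d' a) + 1 := by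
        by_cases hvC : v ∈ C'
        · refine ⟨C'.erase u, ?_, ?_⟩
          · rintro a b hab
            by_cases hau : a = u
            · right
              rw [hleaf b (by rw [← hau]; exact hab)]
              exact Finset.mem_erase.2 ⟨hvu, hvC⟩
            · by_cases hbu : b = u
              · left
                rw [hleaf a (by rw [← hbu]; exact hab.symm)]
                exact Finset.mem_erase.2 ⟨hvu, hvC⟩
              · by_cases hav : a = v
                · exact Or.inl (by rw [hav]; exact Finset.mem_erase.2 ⟨hvu, hvC⟩)
                · by_cases hbv : b = v
                  · exact Or.inr (by rw [hbv]; exact Finset.mem_erase.2 ⟨hvu, hvC⟩)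
                  · rcases hC' (hact' hab hau hav hbu hbv) with h | h
                    · exact Or.inl (Finset.mem_erase.2 ⟨hau, h⟩)
                    · exact Or.inr (Finset.mem_erase.2 ⟨hbu, h⟩)
          · rw [hsumC]
            rw [if_neg (fun h => (Finset.mem_erase.1 h).1 rfl),
              if_pos (Finset.mem_erase.2 ⟨hvu, hvC⟩)]
            have hmono : ∑ a ∈ C'.erase u, d' a ≤ ∑ a ∈ C', d' a :=
              Finset.sum_le_sum_of_subset (Finset.erase_subset u C')
            omega
        · by_cases hdv2 : 2 ≤ d v
          · by_cases huC : u ∈ C'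
            · refine ⟨C', ?_, ?_⟩
              · rintro a b hab
                by_cases hau : a = u
                · exact Or.inl (by rw [hau]; exact huC)
                · by_cases hbu : b = u
                  · exact Or.inr (by rw [hbu]; exact huC)
                  · by_cases hav : a = v
                    · have hbv : b ≠ v := fun h => hab.ne (hav.trans h.symm)
                      have hadj' : (activeG G d').Adj a b := by
                        refine ⟨hab.1, ?_, ?_⟩
                        · rw [hav, hd'v]; omega
                        · rw [hd'other b hbu hbv]; exact hab.2.2
                      rcases hC' hadj' with h | h
                      · exact absurd (by rw [← hav]; exact h) hvC
                      · exact Or.inr h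
                    · by_cases hbv : b = v
                      · have hadj' : (activeG G d').Adj a b := by
                          refine ⟨hab.1, ?_, ?_⟩
                          · rw [hd'other a hau hav]; exact hab.2.1
                          · rw [hbv, hd'v]; omega
                        rcases hC' hadj' with h | h
                        · exact Or.inl h
                        · exact absurd (by rw [← hbv]; exact h) hvC
                      · rcases hC' (hact' hab hau hav hbu hbv) with h | h
                        · exact Or.inl h
                        · exact Or.inr h
              · rw [hsumC, if_pos huC, if_neg hvC]
            · by_cases hd'u0 : 0 < d' u
              · exfalso
                have hadj' : (activeG G d').Adj u v := ⟨hGuv, hd'u0, by rw [hd'v]; omega⟩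
                rcases hC' hadj' with h | h
                · exact huC h
                · exact hvC h
              · push_neg at hd'u0
                refine ⟨insert u C', ?_, ?_⟩
                · rintro a b hab
                  by_cases hau : a = u
                  · exact Or.inl (by rw [hau]; exact Finset.mem_insert_self u C')
                  · by_cases hbu : b = u
                    · exact Or.inr (by rw [hbu]; exact Finset.mem_insert_self u C')
                    · by_cases hav : a = v
                      · have hbv : b ≠ v := fun h => hab.ne (hav.trans h.symm)
                        have hadj' : (activeG G d').Adj a b := by
                          refine ⟨hab.1, by rw [hav, hd'v]; omega, ?_⟩
                          rw [hd'other b hbu hbv]; exact hab.2.2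
                        rcases hC' hadj' with h | h
                        · exact absurd (by rw [← hav]; exact h) hvC
                        · exact Or.inr (Finset.mem_insert_of_mem h)
                      · by_cases hbv : b = v
                        · have hadj' : (activeG G d').Adj a b := by
                            refine ⟨hab.1, by rw [hd'other a hau hav]; exact hab.2.1,
                              by rw [hbv, hd'v]; omega⟩
                          rcases hC' hadj' with h | h
                          · exact Or.inl (Finset.mem_insert_of_mem h)
                          · exact absurd (by rw [← hbv]; exact h) hvC
                        · rcases hC' (hact' hab hau hav hbu hbv) with h | h
                          · exact Or.inl (Finset.mem_insert_of_mem h)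
                          · exact Or.inr (Finset.mem_insert_of_mem h)
                · rw [hsumC, if_pos (Finset.mem_insert_self u C'),
                    if_neg (fun h => hvC (Finset.mem_of_mem_insert_of_ne h hvu))]
                  rw [Finset.sum_insert huC]
                  omega
          · -- v ∉ C', d v = 1
            have hdv1 : d v = 1 := by omega
            refine ⟨insert v (C'.erase u), ?_, ?_⟩
            · rintro a b hab
              by_cases hau : a = u
              · right
                rw [hleaf b (by rw [← hau]; exact hab)]
                exact Finset.mem_insert_self v _
              · by_cases hbu : b = u
                · left
                  rw [hleaf a (by rw [← hbu]; exact hab.symm)]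
                  exact Finset.mem_insert_self v _
                · by_cases hav : a = v
                  · exact Or.inl (by rw [hav]; exact Finset.mem_insert_self v _)
                  · by_cases hbv : b = v
                    · exact Or.inr (by rw [hbv]; exact Finset.mem_insert_self v _)
                    · rcases hC' (hact' hab hau hav hbu hbv) with h | h
                      · exact Or.inl (Finset.mem_insert_of_mem (Finset.mem_erase.2 ⟨hau, h⟩))
                      · exact Or.inr (Finset.mem_insert_of_mem (Finset.mem_erase.2 ⟨hbu, h⟩))
            · rw [hsumC, if_pos (Finset.mem_insert_self v _), if_neg ?hu]
              case hu =>
                intro h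
                rcases Finset.mem_insert.1 h with h | h
                · exact hne h
                · exact (Finset.mem_erase.1 h).1 rfl
              have hvne : v ∉ C'.erase u := fun h => hvC (Finset.mem_of_mem_erase h)
              rw [Finset.sum_insert hvne]
              have hd'v0 : d' v = 0 := by rw [hd'v]; omega
              have hmono : ∑ a ∈ C'.erase u, d' a ≤ ∑ a ∈ C', d' a :=
                Finset.sum_le_sum_of_subset (Finset.erase_subset u C')
              omega
      obtain ⟨C'', hcC, hsC⟩ := key
      have := hcov C'' hcC
      omega
    -- acyclicity for d'
    have hac' : ∀ (w : V) (c : (activeG G d').Walk w w), ¬ c.IsCycle :=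
      acyclic_mono (activeG_mono G hd'le) hac
    obtain ⟨l', hlen', hadj', hms'⟩ := ih d' hac' hcov'
    refine ⟨(u, v) :: l', by simp [hlen'], ?_, ?_⟩
    · rintro p hp
      rcases List.mem_cons.1 hp with rfl | hp
      · exact hGuv
      · exact hadj' p hp
    · rw [msum_cons]
      calc edgeVec u v + msum l' ≤ edgeVec u v + d' := by
            exact add_le_add_right hms' _
        _ = d := by rw [add_comm, hdd]








lemma sub_edgeVec_other (d : V →₀ ℕ) (u v w : V) (h1 : w ≠ u) (h2 : w ≠ v) :
    (d - edgeVec u v) w = d w := by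
  rw [tsub_apply, edgeVec_apply, if_neg (fun h => h1 h.symm), if_neg (fun h => h2 h.symm)]
  omega


lemma active_acyclic {G : SimpleGraph V} {n : ℕ} {x : Fin (2 * n + 1) → V}
    (huni : HasUniqueOddCycle G n x) {d : V →₀ ℕ} {i0 : Fin (2 * n + 1)}
    (h0 : d (x i0) = 0) :
    ∀ (v : V) (c : (activeG G d).Walk v v), ¬ c.IsCycle := by
  intro v c hc
  have hle : activeG G d ≤ G := fun a b h => h.1
  have hsub : ∀ e ∈ c.edges, e ∈ G.edgeSet := fun e he =>
    (SimpleGraph.edgeSet_mono hle) (c.edges_subset_edgeSet he)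
  have := huni.2.2.2 v (c.transfer G hsub) (hc.transfer hsub)
  rw [SimpleGraph.Walk.edges_transfer] at this
  have hmem : s(x i0, x (i0 + 1)) ∈ c.edges := by
    have : s(x i0, x (i0+1)) ∈ {e | e ∈ c.edges} := by
      rw [this]; exact ⟨i0, rfl⟩
    exact this
  have hadj : (activeG G d).Adj (x i0) (x (i0+1)) := c.adj_of_mem_edges hmem
  have h2 := hadj.2.1
  rw [h0] at h2
  exact lt_irrefl 0 h2

lemma cycle_matching (G : SimpleGraph V) (n : ℕ) (x : Fin (2*n+1) → V)
    (hx : Function.Injective x) (hadj : ∀ i, G.Adj (x i) (x (i + 1))) :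
    ∀ (s t : ℕ) (d : V →₀ ℕ), t + 2*s ≤ 2*n+1 →
    (∀ (j : ℕ) (hj : j < 2*n+1), t ≤ j → j < t + 2*s → 0 < d (x ⟨j, hj⟩)) →
    ∃ l : List (V × V), l.length = s ∧ (∀ p ∈ l, G.Adj p.1 p.2) ∧ msum l ≤ d := by
  intro s
  induction s with
  | zero => exact fun t d _ _ => ⟨[], rfl, by simp, by simp [msum]⟩
  | succ s ih =>
    intro t d hts hpos
    have ht0 : t < 2*n+1 := by omega
    have ht1 : t+1 < 2*n+1 := by omega
    set u := x ⟨t, ht0⟩ with hu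
    set v := x ⟨t+1, ht1⟩ with hv
    have hadjuv : G.Adj u v := by
      have h := hadj ⟨t, ht0⟩
      have : (⟨t, ht0⟩ + 1 : Fin (2*n+1)) = ⟨t+1, ht1⟩ := by
        apply Fin.ext
        rw [Fin.add_def]
        simp only [Fin.val_one']
        rw [Nat.mod_eq_of_lt (show (1:ℕ) < 2*n+1 by omega)]
        exact Nat.mod_eq_of_lt ht1
      rwa [this] at h
    have hdu : 0 < d u := hpos t ht0 le_rfl (by omega)
    have hdv : 0 < d v := hpos (t+1) ht1 (by omega) (by omega)
    have hA : (activeG G d).Adj u v := ⟨hadjuv, hdu, hdv⟩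
    have hee : edgeVec u v ≤ d := edgeVec_le hA
    set d' := d - edgeVec u v with hd'
    have hdd : d' + edgeVec u v = d := tsub_add_cancel_of_le hee
    have hpos' : ∀ (j : ℕ) (hj : j < 2*n+1), t+2 ≤ j → j < (t+2) + 2*s → 0 < d' (x ⟨j, hj⟩) := by
      intro j hj h1 h2
      have hne1 : x ⟨j, hj⟩ ≠ u := by
        intro h
        have := hx h
        rw [Fin.mk.injEq] at this
        omega
      have hne2 : x ⟨j, hj⟩ ≠ v := by
        intro h
        have := hx h
        rw [Fin.mk.injEq] at this
        omega
      rw [hd', sub_edgeVec_other d u v _ hne1 hne2]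
      exact hpos j hj (by omega) (by omega)
    obtain ⟨l', hlen, hadj', hms⟩ := ih (t+2) d' (by omega) hpos'
    refine ⟨(u, v) :: l', by simp [hlen], ?_, ?_⟩
    · rintro p hp
      rcases List.mem_cons.1 hp with rfl | hp
      · exact hadjuv
      · exact hadj' p hp
    · rw [msum_cons]
      calc edgeVec u v + msum l' ≤ edgeVec u v + d' := add_le_add_right hms _
        _ = d := by rw [add_comm, hdd]





noncomputable def compVec [Fintype V] (C : Finset V) : V →₀ ℕ := ∑ v ∈ Cᶜ, Finsupp.single v 1

lemma compVec_apply [Fintype V] (C : Finset V) (w : V) :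
    compVec C w = if w ∈ C then 0 else 1 := by
  rw [compVec, Finset.sum_apply']
  simp_rw [Finsupp.single_apply]
  rw [Finset.sum_ite_eq' Cᶜ w (fun _ => 1)]
  simp [Finset.mem_compl]

lemma smul_mk_eq_zero {R : Type*} [CommRing R] (I : Ideal R) (r z : R) :
    r • Ideal.Quotient.mk I z = 0 ↔ r * z ∈ I := by
  rw [Algebra.smul_def, Ideal.Quotient.algebraMap_eq, ← map_mul,
    Ideal.Quotient.eq_zero_iff_mem]

lemma edgeIdeal_le_of_assoc {R : Type*} [CommRing R] {I p : Ideal R}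
    (hp : p ∈ associatedPrimes R (R ⧸ I)) : I ≤ p := by
  obtain ⟨-, x, rfl⟩ := hp
  intro r hr
  refine Ideal.le_radical ?_
  rw [Submodule.mem_colon_singleton, Submodule.mem_bot]
  obtain ⟨z, rfl⟩ := Ideal.Quotient.mk_surjective x
  rw [smul_mk_eq_zero]
  exact I.mul_mem_right z hr

lemma minCover_exists_adj (G : SimpleGraph V) {C : Finset V} (hmin : IsMinCover G C)
    {v : V} (hv : v ∈ C) : ∃ w, G.Adj v w ∧ w ∉ C := by
  have h := hmin.2 v hv
  rw [IsCover] at h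
  push_neg at h
  obtain ⟨a, b, hab, ha, hb⟩ := h
  rcases hmin.1 hab with h1 | h1
  · have : a = v := by
      by_contra hne
      exact ha (Finset.mem_erase.2 ⟨hne, h1⟩)
    subst this
    refine ⟨b, hab, fun hbC => ?_⟩
    exact hb (Finset.mem_erase.2 ⟨fun hbv => (hbv ▸ hab).ne' rfl, hbC⟩)
  · have : b = v := by
      by_contra hne
      exact hb (Finset.mem_erase.2 ⟨hne, h1⟩)
    subst this
    refine ⟨a, hab.symm, fun haC => ?_⟩
    exact ha (Finset.mem_erase.2 ⟨fun hav => (hav ▸ hab).ne rfl, haC⟩)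

lemma minCover_mem_associatedPrimes [Fintype V] (G : SimpleGraph V) {C : Finset V}
    (hmin : IsMinCover G C) :
    Ideal.span (X '' (C : Set V) : Set (MvPolynomial V K)) ∈
      associatedPrimes (MvPolynomial V K) (MvPolynomial V K ⧸ edgeIdeal K G) := by
  refine ⟨isPrime_span_X C,
    Ideal.Quotient.mk _ (monomial (compVec C) (1:K)), ?_⟩
  rw [← (isPrime_span_X (K := K) C).radical]
  congr 1
  refine le_antisymm ?_ ?_
  · -- span ≤ annihilator
    rw [Ideal.span_le]
    rintro _ ⟨v, hv, rfl⟩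
    have hv' : v ∈ C := hv
    simp only [SetLike.mem_coe, Submodule.mem_colon_singleton, Submodule.mem_bot]
    rw [smul_mk_eq_zero]
    obtain ⟨w, hadj, hw⟩ := minCover_exists_adj G hmin hv'
    rw [X, monomial_mul, one_mul, edgeIdeal_eq]
    rw [mem_ideal_span_monomial_image]
    intro d hd
    have hd' : d = (Finsupp.single v 1) + compVec C :=
      ((by simpa [support_monomial] using hd : (Finsupp.single v 1) + compVec C = d)).symm
    subst hd'
    refine ⟨edgeVec v w, ⟨v, w, hadj, rfl⟩, ?_⟩
    intro a
    rw [edgeVec, Finsupp.add_apply, Finsupp.add_apply]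
    gcongr
    rw [Finsupp.single_apply, compVec_apply]
    by_cases h : w = a
    · subst h
      rw [if_pos rfl, if_neg hw]
    · rw [if_neg h]
      exact Nat.zero_le _
  · -- annihilator ≤ span
    intro r hr
    rw [Submodule.mem_colon_singleton, Submodule.mem_bot, smul_mk_eq_zero] at hr
    have hsplit : r - killC C r ∈
        Ideal.span (X '' (C : Set V) : Set (MvPolynomial V K)) := by
      rw [mem_ideal_span_X_image]
      intro d hd
      by_contra hcon
      push_neg at hcon
      have : coeff d (r - killC C r) = 0 := by
        rw [coeff_sub, coeff_killC, if_pos (fun v hv => hcon v (Finset.mem_coe.2 hv)), sub_self]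
      exact (MvPolynomial.mem_support_iff.1 hd) this
    have hkill : killC C r = 0 := by
      by_contra hne
      obtain ⟨e, he⟩ := (MvPolynomial.ne_zero_iff).1 hne
      have heC : ∀ v ∈ C, e v = 0 := by
        by_contra hcon
        rw [coeff_killC, if_neg hcon] at he
        exact he rfl
      have her : coeff e r ≠ 0 := by
        rwa [coeff_killC, if_pos heC] at he
      -- consider the coefficient of e + compVec C in r * monomial
      have hco : coeff (e + compVec C) (r * monomial (compVec C) (1:K)) ≠ 0 := by
        rw [coeff_mul_monomial, mul_one]
        exact her
      rw [edgeIdeal_eq, mem_ideal_span_monomial_image] at hr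
      obtain ⟨d', ⟨u, w, hadj, rfl⟩, hle⟩ := hr (e + compVec C) (MvPolynomial.mem_support_iff.2 hco)
      have key : ∀ a ∈ C, (1:ℕ) ≤ (e + compVec C) a → False := by
        intro a ha hle1
        rw [Finsupp.add_apply, heC a ha, compVec_apply, if_pos ha] at hle1
        exact Nat.not_succ_le_zero 0 hle1
      rcases hmin.1 hadj with h1 | h1
      · refine key u h1 (le_trans ?_ (hle u))
        rw [edgeVec, Finsupp.add_apply, Finsupp.single_apply, if_pos rfl]
        exact Nat.le_add_right 1 _
      · refine key w h1 (le_trans ?_ (hle w))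
        rw [edgeVec, Finsupp.add_apply, Finsupp.single_apply,
          Finsupp.single_apply, if_pos rfl]
        exact Nat.le_add_left 1 _
    have : r = r - killC C r := by rw [hkill, sub_zero]
    rw [this]
    exact hsplit

lemma msum_mem_sumsOf {G : SimpleGraph V} (l : List (V × V)) (s : ℕ)
    (hlen : l.length = s) (hadj : ∀ p ∈ l, G.Adj p.1 p.2) :
    msum l ∈ sumsOf s (edgeVecs G) := by
  refine ⟨l.map fun p => edgeVec p.1 p.2, by simp [hlen], ?_, by rw [msum]⟩
  rintro a ha
  rw [List.mem_map] at ha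
  obtain ⟨p, hp, rfl⟩ := ha
  exact ⟨p.1, p.2, hadj p hp, rfl⟩

lemma span_X_eq (C : Finset V) :
    Ideal.span (X '' (C : Set V) : Set (MvPolynomial V K)) =
      Ideal.span ((fun d => monomial d (1:K)) ''
        ((fun v => Finsupp.single v 1) '' (C : Set V))) := by
  rw [Set.image_image]
  rfl

lemma weight_of_sumsOf {C : Finset V} {e : V →₀ ℕ} {s : ℕ}
    (he : e ∈ sumsOf s ((fun v => Finsupp.single v 1) '' (C : Set V))) :
    ∑ v ∈ C, e v = s := by
  obtain ⟨l, hl, hmem, rfl⟩ := he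
  subst hl
  induction l with
  | nil => simp
  | cons a t ih =>
    rw [List.sum_cons]
    have h1 : ∑ v ∈ C, (a + t.sum) v = (∑ v ∈ C, a v) + ∑ v ∈ C, t.sum v := by
      simp_rw [Finsupp.add_apply]
      rw [Finset.sum_add_distrib]
    rw [h1]
    obtain ⟨w, hw, rfl⟩ := hmem a (by simp)
    have h2 : ∑ v ∈ C, Finsupp.single w (1:ℕ) v = 1 := by
      simp_rw [Finsupp.single_apply]
      rw [Finset.sum_ite_eq C w (fun _ => 1), if_pos (Finset.mem_coe.1 hw)]
    rw [h2, ih (fun b hb => hmem b (by simp [hb]))]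
    simp [add_comm]

lemma weight_of_mem_pow {C : Finset V} {s : ℕ} {f : MvPolynomial V K}
    (hf : f ∈ (Ideal.span (X '' (C : Set V) : Set (MvPolynomial V K))) ^ s)
    {d : V →₀ ℕ} (hd : d ∈ f.support) : s ≤ ∑ v ∈ C, d v := by
  rw [span_X_eq, span_monomial_pow, mem_ideal_span_monomial_image] at hf
  obtain ⟨e, he, hle⟩ := hf d hd
  rw [← weight_of_sumsOf he]
  exact Finset.sum_le_sum (fun v _ => hle v)

end Aux

theorem symbolicPower_eq_pow_of_le {K : Type*} [Field K] {V : Type*} [Fintype V] (n : ℕ)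
    (G : SimpleGraph V) (x : Fin (2 * n + 1) → V) (huni : HasUniqueOddCycle G n x)
    (I : Ideal (MvPolynomial V K)) (hI : I = edgeIdeal K G)
    (s : ℕ) (h1 : 1 ≤ s) (h2 : s ≤ n) :
    symbolicPower I s = I ^ s := by
  classical
  subst hI
  apply le_antisymm
  · -- hard direction
    intro f hf
    have hfmem : ∀ p ∈ associatedPrimes (MvPolynomial V K)
        (MvPolynomial V K ⧸ edgeIdeal K G), f ∈ p ^ s := by
      intro p hp
      rw [symbolicPower] at hf
      simp only [Ideal.mem_iInf] at hf
      exact hf p hp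
    rw [edgeIdeal_eq, span_monomial_pow, mem_ideal_span_monomial_image]
    intro d hd
    have hcov : ∀ C : Finset V, (∀ ⦃a b : V⦄, (activeG G d).Adj a b → a ∈ C ∨ b ∈ C) →
        s ≤ ∑ a ∈ C, d a := by
      intro C hC
      by_contra hlt
      push_neg at hlt
      have hCfull : IsCover G (C ∪ (d.support)ᶜ) := by
        intro a b hab
        by_cases ha : d a = 0
        · exact Or.inl (Finset.mem_union_right _
            (Finset.mem_compl.2 (Finsupp.notMem_support_iff.2 ha)))
        · by_cases hb : d b = 0
          · exact Or.inr (Finset.mem_union_right _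
              (Finset.mem_compl.2 (Finsupp.notMem_support_iff.2 hb)))
          · rcases hC ⟨hab, Nat.pos_of_ne_zero ha, Nat.pos_of_ne_zero hb⟩ with h | h
            · exact Or.inl (Finset.mem_union_left _ h)
            · exact Or.inr (Finset.mem_union_left _ h)
      obtain ⟨C'', hsub, hmin⟩ := exists_minCover_subset G _ hCfull
      have hassoc := minCover_mem_associatedPrimes (K := K) G hmin
      have hfP := hfmem _ hassoc
      have hw : s ≤ ∑ v ∈ C'', d v := weight_of_mem_pow hfP hd
      have hle1 : ∑ v ∈ C'', d v ≤ ∑ v ∈ C ∪ (d.support)ᶜ, d v :=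
        Finset.sum_le_sum_of_subset hsub
      have hle2 : ∑ v ∈ C ∪ (d.support)ᶜ, d v ≤ (∑ v ∈ C, d v) + ∑ v ∈ (d.support)ᶜ, d v := by
        have := Finset.sum_union_inter (s₁ := C) (s₂ := (d.support)ᶜ) (f := fun v => d v)
        omega
      have hle3 : ∑ v ∈ (d.support)ᶜ, d v = 0 :=
        Finset.sum_eq_zero fun a ha =>
          Finsupp.notMem_support_iff.1 (Finset.mem_compl.1 ha)
      omega
    by_cases hall : ∀ i, 0 < d (x i)
    · obtain ⟨l, hlen, hadjl, hms⟩ := cycle_matching G n x huni.2.1 huni.2.2.1 s 0 d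
        (by omega) (fun j hj _ _ => hall ⟨j, hj⟩)
      exact ⟨msum l, msum_mem_sumsOf l s hlen hadjl, hms⟩
    · push_neg at hall
      obtain ⟨i0, hi0⟩ := hall
      have hi0' : d (x i0) = 0 := Nat.le_zero.1 hi0
      obtain ⟨l, hlen, hadjl, hms⟩ := forest_matching G s d
        (active_acyclic huni hi0') hcov
      exact ⟨msum l, msum_mem_sumsOf l s hlen hadjl, hms⟩
  · -- easy direction
    rw [symbolicPower]
    refine le_iInf fun p => le_iInf fun hp => ?_
    exact Ideal.pow_right_mono (edgeIdeal_le_of_assoc hp) s
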